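/- Let α, μ, ν, ν₀, c₃'', E > 0, let φ ∈ (0, 1), let ε satisfy √φ < ε < 1, and set T = (1/ν)·ln[1 + (ν/ν₀)·(φ c₃'')/(2αμ)]. Then for every δ ≥ [ (2αμν₀/c₃'')·E + (μE + 1/√3)·φ ] / (ν₀(ε² − φ)), the inequality (2αμ/(ε c₃''))·[ E + (1/ν)(ν₀δ + μE + 1/√3)(e^{νT} − 1) ] ≤ εδ holds. -/

import Mathlib

/-- the key algebraic step of Theorem 3. With
`T = (1/ν)·ln[1 + (ν/ν₀)·(φc₃'')/(2αμ)]`, `φ ∈ (0,1)`, `√φ < ε < 1`, every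
`δ ≥ [(2αμν₀/c₃'')E + (μE + 1/√3)φ]/(ν₀(ε² − φ))` satisfies
`(2αμ/(εc₃''))·[E + (1/ν)(ν₀δ + μE + 1/√3)(e^{νT} − 1)] ≤ εδ`. -/
theorem stmt8 (α μ ν ν₀ c₃'' E T φ ε : ℝ)
    (hα : 0 < α) (hμ : 0 < μ) (hν : 0 < ν) (hν₀ : 0 < ν₀) (hc₃ : 0 < c₃'') (hE : 0 < E)
    (hφ0 : 0 < φ) (hφ1 : φ < 1) (hε1 : Real.sqrt φ < ε) (hε2 : ε < 1)
    (hT : T = (1 / ν) * Real.log (1 + (ν / ν₀) * (φ * c₃'') / (2 * α * μ))) :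
    ∀ δ : ℝ,
      ((2 * α * μ * ν₀ / c₃'') * E + (μ * E + 1 / Real.sqrt 3) * φ) / (ν₀ * (ε ^ 2 - φ)) ≤ δ →
      (2 * α * μ / (ε * c₃'')) *
          (E + (1 / ν) * (ν₀ * δ + μ * E + 1 / Real.sqrt 3) * (Real.exp (ν * T) - 1)) ≤ ε * δ := by
  intro δ hδ
  have hε0 : 0 < ε := lt_of_le_of_lt (Real.sqrt_nonneg φ) hε1
  have hεφ : φ < ε ^ 2 := by
    have := Real.sq_sqrt hφ0.le
    nlinarith [Real.sqrt_nonneg φ]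
  have hs : 0 < 1 / Real.sqrt 3 := by positivity
  set s : ℝ := 1 / Real.sqrt 3
  have hpos : (0:ℝ) < 1 + (ν / ν₀) * (φ * c₃'') / (2 * α * μ) := by positivity
  have hexp : Real.exp (ν * T) = 1 + (ν / ν₀) * (φ * c₃'') / (2 * α * μ) := by
    rw [hT]
    rw [show ν * ((1/ν) * Real.log (1 + (ν / ν₀) * (φ * c₃'') / (2 * α * μ)))
        = Real.log (1 + (ν / ν₀) * (φ * c₃'') / (2 * α * μ)) by field_simp]
    exact Real.exp_log hpos
  rw [hexp]
  have hA : 0 < ν₀ * (ε ^ 2 - φ) := by nlinarith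
  rw [div_le_iff₀ hA] at hδ
  have hδ0 : 0 < δ := by
    have : 0 < (2 * α * μ * ν₀ / c₃'') * E + (μ * E + s) * φ := by positivity
    nlinarith
  rw [div_mul_eq_mul_div, div_le_iff₀ (by positivity)]
  have h1 : (2 * α * μ * ν₀ / c₃'') * E = 2 * α * μ * ν₀ * E / c₃'' := by ring
  rw [h1] at hδ
  have key : 2 * α * μ * (E + (1/ν) * (ν₀ * δ + μ * E + s) * ((ν / ν₀) * (φ * c₃'') / (2 * α * μ)))
      = 2 * α * μ * E + (ν₀ * δ + μ * E + s) * φ * c₃'' / ν₀ := by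
    field_simp
  have hδ' : 2 * α * μ * ν₀ * E + (μ * E + s) * φ * c₃'' ≤ δ * (ν₀ * (ε ^ 2 - φ)) * c₃'' := by
    have h2 := mul_le_mul_of_nonneg_right hδ hc₃.le
    rw [add_mul, div_mul_cancel₀ _ hc₃.ne'] at h2
    linarith
  have key2 : 2 * α * μ * (E + (1/ν) * (ν₀ * δ + μ * E + s) * (1 + (ν / ν₀) * (φ * c₃'') / (2 * α * μ) - 1))
      = 2 * α * μ * E + (ν₀ * δ + μ * E + s) * φ * c₃'' / ν₀ := by
    rw [← key]; ring_nf
  rw [key2, ← mul_le_mul_iff_of_pos_right hν₀, add_mul, div_mul_cancel₀ _ hν₀.ne']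
  nlinarith [hδ']
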